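/- arXiv:1104.2227 — 5 statements merged into one kernel-verified Lean document; each statement's English description precedes it below -/
import Mathlib

section
/- Let G be a group, H ≤ G a subgroup, and f ∈ G an element such that the subgroups H, fHf⁻¹, f²Hf⁻², ..., f^mHf^{-m} pairwise commute for every m ≥ 1. Then every element of the commutator subgroup [H,H] is a product of at most 2 commutators of elements of G. -/
open scoped commutatorElement

namespace DisplaceableAux

variable {G : Type*} [Group G]

/-- If `x` and `y` each commute with both `z` and `w`, commutators split. -/
lemma comm_split {x y z w : G} (hxz : Commute x z) (hxw : Commute x w)
    (hyz : Commute y z) (hyw : Commute y w) :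
    ⁅x * z, y * w⁆ = ⁅x, y⁆ * ⁅z, w⁆ := by
  have h1 : Commute (x⁻¹ * y⁻¹) (z * w * z⁻¹ * w⁻¹) :=
    (((hxz.mul_right hxw).mul_right hxz.inv_right).mul_right hxw.inv_right).inv_left.mul_left
      (((hyz.mul_right hyw).mul_right hyz.inv_right).mul_right hyw.inv_right).inv_left
  have e1 : z * y = y * z := hyz.eq.symm
  have e2 : x⁻¹ * w⁻¹ = w⁻¹ * x⁻¹ := (hxw.inv_inv).eq
  calc ⁅x * z, y * w⁆ = x * (z * y) * (w * z⁻¹) * (x⁻¹ * w⁻¹) * y⁻¹ := by group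
    _ = x * (y * z) * (w * z⁻¹) * (w⁻¹ * x⁻¹) * y⁻¹ := by rw [e1, e2]
    _ = x * y * ((z * w * z⁻¹ * w⁻¹) * (x⁻¹ * y⁻¹)) := by group
    _ = x * y * ((x⁻¹ * y⁻¹) * (z * w * z⁻¹ * w⁻¹)) := by rw [h1.symm.eq]
    _ = ⁅x, y⁆ * ⁅z, w⁆ := by group

variable (H : Subgroup G) (f : G)

/-- Subgroup generated by the conjugates `f^i H f^{-i}`, `i ≥ 1`. -/
def Ngrp : Subgroup G :=
  Subgroup.closure {x : G | ∃ i : ℕ, 1 ≤ i ∧ ∃ h ∈ H, x = f ^ i * h * (f ^ i)⁻¹}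

variable {H f}

lemma conjH_mem_N {a : G} (ha : a ∈ H) : f * a * f⁻¹ ∈ Ngrp H f :=
  Subgroup.subset_closure ⟨1, le_rfl, a, ha, by simp⟩

lemma conj_mem_N {n : G} (hn : n ∈ Ngrp H f) : f * n * f⁻¹ ∈ Ngrp H f := by
  induction hn using Subgroup.closure_induction with
  | mem x hx =>
    obtain ⟨i, hi, h, hh, rfl⟩ := hx
    refine Subgroup.subset_closure ⟨i + 1, by omega, h, hh, ?_⟩
    rw [pow_succ']
    group
  | one => simpa using (Ngrp H f).one_mem
  | mul x y _ _ hx hy =>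
    have : f * (x * y) * f⁻¹ = (f * x * f⁻¹) * (f * y * f⁻¹) := by group
    rw [this]; exact mul_mem hx hy
  | inv x _ hx =>
    have : f * x⁻¹ * f⁻¹ = (f * x * f⁻¹)⁻¹ := by group
    rw [this]; exact inv_mem hx

lemma commutator_mem_of_mem {a b : G} {K : Subgroup G} (ha : a ∈ K) (hb : b ∈ K) :
    ⁅a, b⁆ ∈ K := by
  rw [commutatorElement_def]
  exact mul_mem (mul_mem (mul_mem ha hb) (inv_mem ha)) (inv_mem hb)

/-- product of commutators of a list of pairs -/
def cprod : List (G × G) → G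
  | [] => 1
  | p :: L => ⁅p.1, p.2⁆ * cprod L

def Aprod (f : G) : List (G × G) → G
  | [] => 1
  | p :: L => (f * p.1 * f⁻¹) * (f * Aprod f L * f⁻¹)

def Bprod (f : G) : List (G × G) → G
  | [] => 1
  | p :: L => (f * p.2 * f⁻¹) * (f * Bprod f L * f⁻¹)

def Qel (f : G) : List (G × G) → G
  | [] => 1
  | p :: L => (⁅p.1, p.2⁆ * cprod L) * (f * Qel f L * f⁻¹)

lemma cprod_append (L₁ L₂ : List (G × G)) : cprod (L₁ ++ L₂) = cprod L₁ * cprod L₂ := by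
  induction L₁ with
  | nil => simp [cprod]
  | cons p L ih => simp [cprod, ih, mul_assoc]

lemma cprod_inv (L : List (G × G)) :
    (cprod L)⁻¹ = cprod (L.reverse.map Prod.swap) := by
  induction L with
  | nil => simp [cprod]
  | cons p L ih =>
    simp only [cprod, mul_inv_rev, List.reverse_cons, List.map_append, cprod_append, ih]
    simp [cprod, Prod.swap]

/-- main induction -/
lemma main (hcomm : ∀ h ∈ H, ∀ n ∈ Ngrp H f, Commute h n) :
    ∀ L : List (G × G), (∀ p ∈ L, p.1 ∈ H ∧ p.2 ∈ H) →
      cprod L ∈ H ∧ Aprod f L ∈ Ngrp H f ∧ Bprod f L ∈ Ngrp H f ∧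
      cprod L = ⁅Qel f L, f⁆ * ⁅Aprod f L, Bprod f L⁆ := by
  intro L
  induction L with
  | nil =>
    intro _
    refine ⟨one_mem _, one_mem _, one_mem _, ?_⟩
    simp [cprod, Aprod, Bprod, Qel]
  | cons p L ih =>
    intro hL
    obtain ⟨a, b⟩ := p
    obtain ⟨ha, hb⟩ := hL (a, b) List.mem_cons_self
    obtain ⟨hc', hA', hB', hQ'⟩ := ih (fun q hq => hL q (List.mem_cons_of_mem _ hq))
    set c' := cprod L with hc'def
    set A' := Aprod f L with hA'def
    set B' := Bprod f L with hB'def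
    set Q' := Qel f L with hQ'def
    have memc : cprod ((a, b) :: L) ∈ H := by
      rw [cprod]; exact mul_mem (commutator_mem_of_mem ha hb) hc'
    have memA : Aprod f ((a, b) :: L) ∈ Ngrp H f := by
      rw [Aprod]; exact mul_mem (conjH_mem_N ha) (conj_mem_N hA')
    have memB : Bprod f ((a, b) :: L) ∈ Ngrp H f := by
      rw [Bprod]; exact mul_mem (conjH_mem_N hb) (conj_mem_N hB')
    refine ⟨memc, memA, memB, ?_⟩
    -- commutation facts
    have hcAB' : ⁅A', B'⁆ ∈ Ngrp H f := commutator_mem_of_mem hA' hB'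
    have hcc' : c' * ⁅A', B'⁆ * c'⁻¹ = ⁅A', B'⁆ := by
      rw [(hcomm c' hc' ⁅A', B'⁆ hcAB').eq]; group
    have hAB : ⁅Aprod f ((a, b) :: L), Bprod f ((a, b) :: L)⁆
        = f * (⁅a, b⁆ * (c' * ⁅A', B'⁆ * c'⁻¹)) * f⁻¹ := by
      rw [Aprod, Bprod, ← hA'def, ← hB'def]
      rw [comm_split ((hcomm a ha A' hA').conj f) ((hcomm a ha B' hB').conj f)
        ((hcomm b hb A' hA').conj f) ((hcomm b hb B' hB').conj f)]
      rw [← conjugate_commutatorElement, ← conjugate_commutatorElement, hcc']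
      group
    rw [hAB]
    show ⁅a, b⁆ * c' = ⁅Qel f ((a, b) :: L), f⁆ * (f * (⁅a, b⁆ * (c' * ⁅A', B'⁆ * c'⁻¹)) * f⁻¹)
    rw [Qel, ← hQ'def, ← hc'def]
    -- use IH : c' = ⁅Q', f⁆ * ⁅A', B'⁆
    rw [hQ']
    simp only [commutatorElement_def]
    group

end DisplaceableAux

open DisplaceableAux in
theorem commutator_of_displaceable_is_two_commutators {G : Type*} [Group G]
    (H : Subgroup G) (f : G)
    (hdisp : ∀ m : ℕ, 1 ≤ m → ∀ i j : ℕ, i ≤ m → j ≤ m → i ≠ j →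
      ∀ a b : G, a ∈ H → b ∈ H →
        Commute (f ^ i * a * (f ^ i)⁻¹) (f ^ j * b * (f ^ j)⁻¹)) :
    ∀ g ∈ ⁅H, H⁆, ∃ a b c d : G, g = ⁅a, b⁆ * ⁅c, d⁆ := by
  have hcomm : ∀ h ∈ H, ∀ n ∈ Ngrp H f, Commute h n := by
    intro h hh n hn
    induction hn using Subgroup.closure_induction with
    | mem x hx =>
      obtain ⟨i, hi, a, ha, rfl⟩ := hx
      have := hdisp i hi 0 i (Nat.zero_le i) le_rfl (by omega) h a hh ha
      simpa using this
    | one => exact Commute.one_right h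
    | mul x y _ _ hx hy => exact hx.mul_right hy
    | inv x _ hx => exact hx.inv_right
  intro g hg
  -- first: represent g as cprod L
  have hrep : ∃ L : List (G × G), (∀ p ∈ L, p.1 ∈ H ∧ p.2 ∈ H) ∧ g = cprod L := by
    rw [Subgroup.commutator_def] at hg
    induction hg using Subgroup.closure_induction with
    | mem x hx =>
      obtain ⟨g₁, h₁, g₂, h₂, rfl⟩ := hx
      exact ⟨[(g₁, g₂)], by simp [h₁, h₂], by simp [cprod]⟩
    | one => exact ⟨[], by simp, by simp [cprod]⟩
    | mul x y _ _ hx hy =>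
      obtain ⟨L₁, hL₁, rfl⟩ := hx
      obtain ⟨L₂, hL₂, rfl⟩ := hy
      refine ⟨L₁ ++ L₂, ?_, (cprod_append L₁ L₂).symm⟩
      intro q hq
      rcases List.mem_append.mp hq with h | h
      · exact hL₁ q h
      · exact hL₂ q h
    | inv x _ hx =>
      obtain ⟨L, hL, rfl⟩ := hx
      refine ⟨L.reverse.map Prod.swap, ?_, (cprod_inv L)⟩
      intro q hq
      simp only [List.mem_map, List.mem_reverse] at hq
      obtain ⟨r, hr, rfl⟩ := hq
      exact ⟨(hL r hr).2, (hL r hr).1⟩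
  obtain ⟨L, hL, rfl⟩ := hrep
  obtain ⟨-, -, -, hmain⟩ := main hcomm L hL
  exact ⟨Qel f L, f, Aprod f L, Bprod f L, hmain⟩
end

section
/- Let G be a group with a conjugation-invariant norm ν, H ≤ G a subgroup, and g ∈ G an element that strongly m-displaces H for every m ≥ 1 (i.e., H, gHg⁻¹, ..., g^mHg^{-m} pairwise commute). Then ν(h) ≤ 14ν(g) for all h in the commutator subgroup [H,H]. -/
/-- A conjugation-invariant norm on a group `G`. -/
def IsConjInvariantNorm {G : Type*} [Group G] (ν : G → ℝ) : Prop :=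
  (∀ g, 0 ≤ ν g) ∧ (∀ g : G, 0 < ν g ↔ g ≠ 1) ∧ (∀ g : G, ν g⁻¹ = ν g) ∧
    (∀ g h : G, ν (g * h) ≤ ν g + ν h) ∧ (∀ g h : G, ν (h * g * h⁻¹) = ν g)

open scoped commutatorElement

namespace NormDisp

variable {G : Type*} [Group G]

/-- product of conjugates `a₀ · g²a₁g⁻² · g⁴a₂g⁻⁴ ⋯` -/
def PP (g : G) : List G → G
  | [] => 1
  | a :: t => a * (g ^ 2 * PP g t * (g ^ 2)⁻¹)

/-- product of commutators -/
def XX : List (G × G) → G := fun l => (l.map fun p => ⁅p.1, p.2⁆).prod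

/-- telescoped product -/
def UU (g : G) : List (G × G) → G
  | [] => 1
  | p :: t => XX (p :: t) * (g ^ 2 * UU g t * (g ^ 2)⁻¹)

lemma XX_nil : XX ([] : List (G × G)) = 1 := rfl

lemma XX_cons (p : G × G) (t : List (G × G)) : XX (p :: t) = ⁅p.1, p.2⁆ * XX t := by
  simp [XX]

lemma XX_append (l₁ l₂ : List (G × G)) : XX (l₁ ++ l₂) = XX l₁ * XX l₂ := by
  simp [XX]

lemma XX_inv (l : List (G × G)) : (XX l)⁻¹ = XX (l.reverse.map Prod.swap) := by
  induction l with
  | nil => simp [XX_nil]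
  | cons p t ih =>
    rw [XX_cons, mul_inv_rev, ih]
    have h1 : (p :: t).reverse.map Prod.swap = t.reverse.map Prod.swap ++ [p.swap] := by simp
    have h2 : XX [p.swap] = ⁅p.2, p.1⁆ := by simp [XX]
    rw [h1, XX_append, h2, commutatorElement_inv]

lemma UU_eq (g : G) (t : List (G × G)) :
    UU g t = XX t * (g ^ 2 * UU g t.tail * (g ^ 2)⁻¹) := by
  cases t with
  | nil => simp [UU, XX_nil]
  | cons p t => rfl

variable {H : Subgroup G} {g : G}
variable (hdisp : ∀ m : ℕ, 1 ≤ m → ∀ i j : ℕ, i ≤ m → j ≤ m → i ≠ j →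
      ∀ a b : G, a ∈ H → b ∈ H →
        Commute (g ^ i * a * (g ^ i)⁻¹) (g ^ j * b * (g ^ j)⁻¹))

include hdisp

lemma master : ∀ (m : List G), (∀ x ∈ m, x ∈ H) → ∀ (a : G), a ∈ H →
    ∀ i j : ℕ, (∀ l : ℕ, i ≠ j + 2 * l) →
    Commute (g ^ i * a * (g ^ i)⁻¹) (g ^ j * PP g m * (g ^ j)⁻¹) := by
  intro m
  induction m with
  | nil =>
    intro _ a _ i j _
    simp [PP]
  | cons b t ih =>
    intro hm a ha i j hij
    have hsplit : g ^ j * PP g (b :: t) * (g ^ j)⁻¹ =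
        (g ^ j * b * (g ^ j)⁻¹) * (g ^ (j + 2) * PP g t * (g ^ (j + 2))⁻¹) := by
      simp only [PP, pow_add]
      group
    rw [hsplit]
    refine Commute.mul_right ?_ ?_
    · refine hdisp (i + j + 1) (by omega) i j (by omega) (by omega) ?_ a b ha
        (hm b (by simp))
      have := hij 0
      omega
    · exact ih (fun x hx => hm x (by simp [hx])) a ha i (j + 2) (fun l => by
        have := hij (l + 1); omega)

lemma master2 : ∀ (m₁ : List G), (∀ x ∈ m₁, x ∈ H) → ∀ (m₂ : List G), (∀ x ∈ m₂, x ∈ H) →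
    ∀ i j : ℕ, Odd (i + j) →
    Commute (g ^ i * PP g m₁ * (g ^ i)⁻¹) (g ^ j * PP g m₂ * (g ^ j)⁻¹) := by
  intro m₁
  induction m₁ with
  | nil =>
    intro _ m₂ _ i j _
    simp [PP]
  | cons a t ih =>
    intro hm₁ m₂ hm₂ i j hodd
    have hsplit : g ^ i * PP g (a :: t) * (g ^ i)⁻¹ =
        (g ^ i * a * (g ^ i)⁻¹) * (g ^ (i + 2) * PP g t * (g ^ (i + 2))⁻¹) := by
      simp only [PP, pow_add]
      group
    rw [hsplit]
    refine Commute.mul_left ?_ ?_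
    · refine master hdisp m₂ hm₂ a (hm₁ a (by simp)) i j (fun l h => ?_)
      obtain ⟨k, hk⟩ := hodd
      omega
    · refine ih (fun x hx => hm₁ x (by simp [hx])) m₂ hm₂ (i + 2) j ?_
      obtain ⟨k, hk⟩ := hodd
      exact ⟨k + 1, by omega⟩

/-- elements of `H` commute with conjugated `PP`-products (conjugation exponent ≥ 1). -/
lemma commH (m : List G) (hm : ∀ x ∈ m, x ∈ H) (a : G) (ha : a ∈ H) (j : ℕ) (hj : 1 ≤ j) :
    Commute a (g ^ j * PP g m * (g ^ j)⁻¹) := by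
  have := master hdisp m hm a ha 0 j (fun l => by omega)
  simpa using this

lemma XX_mem (l : List (G × G)) (hl : ∀ p ∈ l, p.1 ∈ H ∧ p.2 ∈ H) : XX l ∈ H := by
  induction l with
  | nil => simpa [XX_nil] using one_mem H
  | cons p t ih =>
    rw [XX_cons]
    refine mul_mem ?_ (ih (fun q hq => hl q (by simp [hq])))
    have h1 := (hl p (by simp)).1
    have h2 := (hl p (by simp)).2
    exact mul_mem (mul_mem (mul_mem h1 h2) (inv_mem h1)) (inv_mem h2)

omit hdisp in
lemma comm_expand (a b P Q : G) (haP : Commute a P) (haQ : Commute a Q)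
    (hbP : Commute b P) (hbQ : Commute b Q) :
    ⁅a * P, b * Q⁆ = ⁅a, b⁆ * ⁅P, Q⁆ := by
  have haPQ : Commute a (P * Q * P⁻¹ * Q⁻¹) :=
    ((haP.mul_right haQ).mul_right haP.inv_right).mul_right haQ.inv_right
  have hbPQ : Commute b (P * Q * P⁻¹ * Q⁻¹) :=
    ((hbP.mul_right hbQ).mul_right hbP.inv_right).mul_right hbQ.inv_right
  simp only [commutatorElement_def, mul_inv_rev]
  calc a * P * (b * Q) * (P⁻¹ * a⁻¹) * (Q⁻¹ * b⁻¹)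
      = a * (P * b) * Q * P⁻¹ * (a⁻¹ * Q⁻¹) * b⁻¹ := by group
    _ = a * (b * P) * Q * P⁻¹ * (Q⁻¹ * a⁻¹) * b⁻¹ := by
        rw [hbP.symm.eq, haQ.inv_right.inv_left.eq]
    _ = a * b * (P * Q * P⁻¹ * Q⁻¹ * a⁻¹) * b⁻¹ := by group
    _ = a * b * (a⁻¹ * (P * Q * P⁻¹ * Q⁻¹)) * b⁻¹ := by
        rw [haPQ.inv_left.symm.eq]
    _ = a * b * a⁻¹ * (P * Q * P⁻¹ * Q⁻¹ * b⁻¹) := by group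
    _ = a * b * a⁻¹ * (b⁻¹ * (P * Q * P⁻¹ * Q⁻¹)) := by
        rw [hbPQ.inv_left.symm.eq]
    _ = a * b * a⁻¹ * b⁻¹ * (P * Q * P⁻¹ * Q⁻¹) := by group

lemma key : ∀ (l : List (G × G)), (∀ p ∈ l, p.1 ∈ H ∧ p.2 ∈ H) →
    UU g l = ⁅PP g (l.map Prod.fst), PP g (l.map Prod.snd)⁆ * UU g l.tail := by
  intro l
  induction l with
  | nil => intro _; simp [UU, PP]
  | cons p t ih =>
    intro hl
    have ht : ∀ q ∈ t, q.1 ∈ H ∧ q.2 ∈ H := fun q hq => hl q (by simp [hq])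
    have hfst : ∀ x ∈ t.map Prod.fst, x ∈ H := by
      intro x hx
      obtain ⟨q, hq, rfl⟩ := List.mem_map.mp hx
      exact (ht q hq).1
    have hsnd : ∀ x ∈ t.map Prod.snd, x ∈ H := by
      intro x hx
      obtain ⟨q, hq, rfl⟩ := List.mem_map.mp hx
      exact (ht q hq).2
    set A := PP g (t.map Prod.fst) with hA
    set B := PP g (t.map Prod.snd) with hB
    set KA := g ^ 2 * A * (g ^ 2)⁻¹ with hKA
    set KB := g ^ 2 * B * (g ^ 2)⁻¹ with hKB
    have h1 : p.1 ∈ H := (hl p (by simp)).1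
    have h2 : p.2 ∈ H := (hl p (by simp)).2
    have c1A : Commute p.1 KA := commH hdisp _ hfst _ h1 2 (by omega)
    have c1B : Commute p.1 KB := commH hdisp _ hsnd _ h1 2 (by omega)
    have c2A : Commute p.2 KA := commH hdisp _ hfst _ h2 2 (by omega)
    have c2B : Commute p.2 KB := commH hdisp _ hsnd _ h2 2 (by omega)
    have hPPcons1 : PP g ((p :: t).map Prod.fst) = p.1 * KA := by
      simp [PP, hKA, hA]
    have hPPcons2 : PP g ((p :: t).map Prod.snd) = p.2 * KB := by
      simp [PP, hKB, hB]
    rw [hPPcons1, hPPcons2, comm_expand _ _ _ _ c1A c1B c2A c2B]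
    have hKcomm : ⁅KA, KB⁆ = g ^ 2 * ⁅A, B⁆ * (g ^ 2)⁻¹ := by
      simp only [commutatorElement_def, hKA, hKB]
      group
    have hXmem : XX t ∈ H := XX_mem hdisp t ht
    have cXA : Commute (XX t) KA := commH hdisp _ hfst _ hXmem 2 (by omega)
    have cXB : Commute (XX t) KB := commH hdisp _ hsnd _ hXmem 2 (by omega)
    have cXK : Commute (XX t) ⁅KA, KB⁆ := by
      simp only [commutatorElement_def]
      exact ((cXA.mul_right cXB).mul_right cXA.inv_right).mul_right cXB.inv_right
    have goal_eq :
        ⁅p.1, p.2⁆ * XX t * (g ^ 2 * (⁅A, B⁆ * UU g t.tail) * (g ^ 2)⁻¹)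
          = ⁅p.1, p.2⁆ * ⁅KA, KB⁆ * (XX t * (g ^ 2 * UU g t.tail * (g ^ 2)⁻¹)) := by
      have e := cXK.eq
      calc ⁅p.1, p.2⁆ * XX t * (g ^ 2 * (⁅A, B⁆ * UU g t.tail) * (g ^ 2)⁻¹)
          = ⁅p.1, p.2⁆ * (XX t * ⁅KA, KB⁆) * (g ^ 2 * UU g t.tail * (g ^ 2)⁻¹) := by
            rw [hKcomm]; group
        _ = ⁅p.1, p.2⁆ * (⁅KA, KB⁆ * XX t) * (g ^ 2 * UU g t.tail * (g ^ 2)⁻¹) := by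
            rw [e]
        _ = ⁅p.1, p.2⁆ * ⁅KA, KB⁆ * (XX t * (g ^ 2 * UU g t.tail * (g ^ 2)⁻¹)) := by
            group
    show XX (p :: t) * (g ^ 2 * UU g t * (g ^ 2)⁻¹) = _
    rw [XX_cons, List.tail_cons]
    conv_lhs => rw [ih ht]
    conv_rhs => rw [UU_eq g t]
    exact goal_eq

end NormDisp

theorem norm_le_of_displaceable {G : Type*} [Group G] (ν : G → ℝ)
    (hν : IsConjInvariantNorm ν) (H : Subgroup G) (g : G)
    (hdisp : ∀ m : ℕ, 1 ≤ m → ∀ i j : ℕ, i ≤ m → j ≤ m → i ≠ j →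
      ∀ a b : G, a ∈ H → b ∈ H →
        Commute (g ^ i * a * (g ^ i)⁻¹) (g ^ j * b * (g ^ j)⁻¹)) :
    ∀ h ∈ ⁅H, H⁆, ν h ≤ 14 * ν g := by
  obtain ⟨hnn, hpos, hinv, htri, hconj⟩ := hν
  have hone : ν 1 = 0 := by
    have h1 : ¬ (0 < ν 1) := by simp [hpos]
    linarith [hnn 1]
  have hg0 : 0 ≤ ν g := hnn g
  have hg2 : ν (g ^ 2) ≤ 2 * ν g := by
    have := htri g g
    rw [pow_two]
    linarith
  -- norm bound for XX l
  have hXXbound : ∀ (l : List (G × G)), (∀ p ∈ l, p.1 ∈ H ∧ p.2 ∈ H) →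
      ν (NormDisp.XX l) ≤ 8 * ν g := by
    intro l hl
    cases l with
    | nil => rw [NormDisp.XX_nil, hone]; linarith
    | cons p t =>
      have ht : ∀ q ∈ t, q.1 ∈ H ∧ q.2 ∈ H := fun q hq => hl q (by simp [hq])
      have hfst' : ∀ x ∈ (p :: t).map Prod.fst, x ∈ H := by
        intro x hx
        obtain ⟨q, hq, rfl⟩ := List.mem_map.mp hx; exact (hl q hq).1
      have hsnd' : ∀ x ∈ (p :: t).map Prod.snd, x ∈ H := by
        intro x hx
        obtain ⟨q, hq, rfl⟩ := List.mem_map.mp hx; exact (hl q hq).2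
      set A := NormDisp.PP g ((p :: t).map Prod.fst) with hA
      set B := NormDisp.PP g ((p :: t).map Prod.snd) with hB
      set u := NormDisp.UU g t with hu
      have hXX : NormDisp.XX (p :: t) = ⁅A, B⁆ * ((u * g ^ 2 * u⁻¹) * (g ^ 2)⁻¹) := by
        have h1 := NormDisp.UU_eq g (p :: t)
        have h2 := NormDisp.key hdisp (p :: t) hl
        simp only [List.tail_cons] at h1 h2
        rw [← hu] at h1 h2
        have h3 : NormDisp.XX (p :: t) = NormDisp.UU g (p :: t) * (g ^ 2 * u * (g ^ 2)⁻¹)⁻¹ := by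
          rw [h1]; group
        rw [h3, h2, ← hA, ← hB]
        group
      -- bound ⁅A,B⁆ via ⁅A,B⁆ = ⁅⁅A,g⁆,B⁆
      have hcommBA : Commute B (g * A * g⁻¹) := by
        have := NormDisp.master2 hdisp _ hsnd' _ hfst' 0 1 ⟨0, by omega⟩
        simpa [hA, hB] using this
      have hid : ⁅A, B⁆ = ⁅⁅A, g⁆, B⁆ := by
        have e1 : B * (g * A * g⁻¹) = (g * A * g⁻¹) * B := hcommBA.eq
        calc ⁅A, B⁆ = A * (g * A⁻¹ * g⁻¹) * ((g * A * g⁻¹) * B) * A⁻¹ * B⁻¹ := by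
              simp only [commutatorElement_def]; group
          _ = A * (g * A⁻¹ * g⁻¹) * (B * (g * A * g⁻¹)) * A⁻¹ * B⁻¹ := by rw [e1]
          _ = ⁅⁅A, g⁆, B⁆ := by
              simp only [commutatorElement_def, mul_inv_rev]; group
      have hnuc : ν ⁅A, g⁆ ≤ 2 * ν g := by
        have h4 : (⁅A, g⁆ : G) = (A * g * A⁻¹) * g⁻¹ := by
          simp only [commutatorElement_def]
        rw [h4]
        have := htri (A * g * A⁻¹) g⁻¹
        rw [hconj g A, hinv g] at this
        linarith
      have hnuAB : ν ⁅A, B⁆ ≤ 4 * ν g := by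
        rw [hid]
        have h5 : (⁅⁅A, g⁆, B⁆ : G) = ⁅A, g⁆ * (B * ⁅A, g⁆⁻¹ * B⁻¹) := by
          simp only [commutatorElement_def, mul_inv_rev]; group
        rw [h5]
        have h6 := htri ⁅A, g⁆ (B * ⁅A, g⁆⁻¹ * B⁻¹)
        rw [hconj (⁅A, g⁆⁻¹) B, hinv] at h6
        linarith
      rw [hXX]
      have h7 := htri ⁅A, B⁆ ((u * g ^ 2 * u⁻¹) * (g ^ 2)⁻¹)
      have h8 := htri (u * g ^ 2 * u⁻¹) ((g ^ 2)⁻¹)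
      rw [hconj (g ^ 2) u, hinv (g ^ 2)] at h8
      linarith
  -- decompose h into a list of commutators
  intro h hmem
  rw [Subgroup.commutator_def] at hmem
  have hex : ∃ l : List (G × G), (∀ p ∈ l, p.1 ∈ H ∧ p.2 ∈ H) ∧ h = NormDisp.XX l := by
    refine Subgroup.closure_induction
      (p := fun x _ => ∃ l : List (G × G), (∀ p ∈ l, p.1 ∈ H ∧ p.2 ∈ H) ∧ x = NormDisp.XX l)
      ?_ ?_ ?_ ?_ hmem
    · rintro x ⟨g₁, hg₁, g₂, hg₂, rfl⟩
      exact ⟨[(g₁, g₂)], by simp [hg₁, hg₂], by simp [NormDisp.XX]⟩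
    · exact ⟨[], by simp, rfl⟩
    · rintro x y _ _ ⟨l₁, hl₁, rfl⟩ ⟨l₂, hl₂, rfl⟩
      refine ⟨l₁ ++ l₂, ?_, (NormDisp.XX_append l₁ l₂).symm⟩
      intro q hq
      rcases List.mem_append.mp hq with h' | h'
      · exact hl₁ q h'
      · exact hl₂ q h'
    · rintro x _ ⟨l, hl, rfl⟩
      refine ⟨l.reverse.map Prod.swap, ?_, NormDisp.XX_inv l⟩
      intro q hq
      obtain ⟨r, hr, rfl⟩ := List.mem_map.mp hq
      have := hl r (List.mem_reverse.mp hr)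
      exact ⟨this.2, this.1⟩
  obtain ⟨l, hl, rfl⟩ := hex
  have := hXXbound l hl
  linarith
end

section
/- Every compactly supported homeomorphism g of ℝⁿ is isotopic to the identity via the Alexander isotopy: g_t(x) = t·g(x/t) for t ∈ (0,1] and g_0 = id defines a continuous family of homeomorphisms of ℝⁿ with g_1 = g and g_0 = id. -/
theorem alexander_isotopy (n : ℕ) (g : (Fin n → ℝ) ≃ₜ (Fin n → ℝ))
    (hg : IsCompact (closure {x | g x ≠ x}))
    (F : ℝ × (Fin n → ℝ) → (Fin n → ℝ))
    (hF : ∀ t x, F (t, x) = if t = 0 then x else t • g (t⁻¹ • x)) :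
    ContinuousOn F (Set.Icc (0 : ℝ) 1 ×ˢ (Set.univ : Set (Fin n → ℝ))) ∧
      (∀ x, F (1, x) = g x) ∧ (∀ x, F (0, x) = x) ∧
      ∀ t ∈ Set.Icc (0 : ℝ) 1, ∃ h : (Fin n → ℝ) ≃ₜ (Fin n → ℝ), ∀ x, h x = F (t, x) := by
  -- uniform bound on ‖g y - y‖
  obtain ⟨C, hC0, hC⟩ : ∃ C : ℝ, 0 ≤ C ∧ ∀ y, ‖g y - y‖ ≤ C := by
    rcases (closure {x | g x ≠ x}).eq_empty_or_nonempty with h | h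
    · refine ⟨0, le_refl _, fun y => ?_⟩
      have hy : g y = y := by
        by_contra hy
        have : y ∈ closure {x | g x ≠ x} := subset_closure hy
        simp [h] at this
      simp [hy]
    · obtain ⟨z, hz, hzmax⟩ := hg.exists_isMaxOn h
        ((g.continuous.sub continuous_id).norm.continuousOn)
      refine ⟨‖g z - z‖, norm_nonneg _, fun y => ?_⟩
      by_cases hy : y ∈ closure {x | g x ≠ x}
      · exact hzmax hy
      · have hgy : g y = y := by
          by_contra h'
          exact hy (subset_closure h')
        simp [hgy, norm_nonneg]
  have hcont : Continuous F := by
    rw [continuous_iff_continuousAt]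
    rintro ⟨t₀, x₀⟩
    rcases eq_or_ne t₀ 0 with rfl | ht₀
    · -- continuity at t = 0
      have key : ∀ p : ℝ × (Fin n → ℝ), ‖F p - p.2‖ ≤ |p.1| * C := by
        rintro ⟨t, x⟩
        rcases eq_or_ne t 0 with rfl | ht
        · simp [hF]
        · have he : F (t, x) - x = t • (g (t⁻¹ • x) - t⁻¹ • x) := by
            rw [hF]
            simp [ht, smul_sub, smul_inv_smul₀ ht]
          have : ‖F (t, x) - x‖ = |t| * ‖g (t⁻¹ • x) - t⁻¹ • x‖ := by
            rw [he, norm_smul, Real.norm_eq_abs]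
          rw [this]
          exact mul_le_mul_of_nonneg_left (hC _) (abs_nonneg t)
      have h1 : Filter.Tendsto (fun p : ℝ × (Fin n → ℝ) => F p - p.2)
          (nhds ((0 : ℝ), x₀)) (nhds 0) := by
        apply squeeze_zero_norm key
        have : Filter.Tendsto (fun p : ℝ × (Fin n → ℝ) => |p.1| * C)
            (nhds ((0 : ℝ), x₀)) (nhds (|(0 : ℝ)| * C)) :=
          ((continuous_abs.comp continuous_fst).mul continuous_const).tendsto _
        simpa using this
      have h2 : Filter.Tendsto (fun p : ℝ × (Fin n → ℝ) => p.2)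
          (nhds ((0 : ℝ), x₀)) (nhds x₀) := continuous_snd.tendsto _
      have h3 := h1.add h2
      have heq : (fun p : ℝ × (Fin n → ℝ) => F p - p.2 + p.2) = fun p => F p := by
        funext p; abel
      rw [heq] at h3
      have : F (0, x₀) = x₀ := by simp [hF]
      simpa [ContinuousAt, this] using h3
    · -- continuity at t₀ ≠ 0
      have hc : ContinuousAt (fun p : ℝ × (Fin n → ℝ) => p.1 • g (p.1⁻¹ • p.2)) (t₀, x₀) := by
        have h1 : ContinuousAt (fun p : ℝ × (Fin n → ℝ) => p.1⁻¹ • p.2) (t₀, x₀) :=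
          (continuousAt_fst.inv₀ ht₀).smul continuousAt_snd
        exact continuousAt_fst.smul (g.continuous.continuousAt.comp h1)
      refine hc.congr ?_
      have hopen : {p : ℝ × (Fin n → ℝ) | p.1 ≠ 0} ∈ nhds (t₀, x₀) :=
        (isOpen_compl_iff.2 (isClosed_eq continuous_fst continuous_const)).mem_nhds ht₀
      filter_upwards [hopen] with p hp
      have : F p = F (p.1, p.2) := by rfl
      rw [this, hF, if_neg hp]
  refine ⟨hcont.continuousOn, fun x => by simp [hF], fun x => by simp [hF], ?_⟩
  rintro t ⟨ht0, ht1⟩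
  rcases eq_or_ne t 0 with rfl | ht
  · exact ⟨Homeomorph.refl _, fun x => by simp [hF]⟩
  · refine ⟨((Homeomorph.smulOfNeZero t ht).symm.trans g).trans (Homeomorph.smulOfNeZero t ht),
      fun x => ?_⟩
    rw [hF, if_neg ht]
    simp [Homeomorph.smulOfNeZero, Units.smul_def]
end

section
/- An abelian group is bounded (every conjugation-invariant norm is bounded) if and only if it is finite. -/
universe u

attribute [local instance] Classical.propDecidable


/-- From an unbounded "seminorm" on an abelian group we get an unbounded
conjugation-invariant norm, by adding an indicator of nontriviality. -/
lemma norm_of_seminorm {G : Type*} [CommGroup G] (μ : G → ℝ)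
    (h0 : μ 1 = 0) (hnn : ∀ g, 0 ≤ μ g) (hinv : ∀ g, μ g⁻¹ = μ g)
    (hadd : ∀ g h, μ (g * h) ≤ μ g + μ h) :
    IsConjInvariantNorm (fun g => μ g + if g = 1 then 0 else 1) := by
  have key : ∀ g : G, (0:ℝ) ≤ if g = 1 then 0 else 1 := fun g => by
    by_cases h : g = 1 <;> simp [h]
  refine ⟨fun g => add_nonneg (hnn g) (key g), fun g => ?_, fun g => ?_,
    fun g h => ?_, fun g h => ?_⟩
  · show 0 < μ g + (if g = 1 then 0 else 1) ↔ g ≠ 1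
    by_cases h : g = 1
    · simp [h, h0]
    · simp only [if_neg h]
      constructor
      · intro _; exact h
      · intro _; have := hnn g; linarith
  · show μ g⁻¹ + (if g⁻¹ = 1 then (0:ℝ) else 1) = μ g + (if g = 1 then 0 else 1)
    simp only [hinv, inv_eq_one]
  · show μ (g * h) + (if g * h = 1 then (0:ℝ) else 1)
      ≤ (μ g + (if g = 1 then 0 else 1)) + (μ h + (if h = 1 then 0 else 1))
    have h2 : (if g * h = 1 then (0:ℝ) else 1)
        ≤ (if g = 1 then (0:ℝ) else 1) + (if h = 1 then (0:ℝ) else 1) := by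
      by_cases hg : g = 1 <;> by_cases hh : h = 1 <;>
        simp [hg, hh] <;> split <;> norm_num
    linarith [hadd g h]
  · show μ (h * g * h⁻¹) + (if h * g * h⁻¹ = 1 then (0:ℝ) else 1)
      = μ g + (if g = 1 then 0 else 1)
    have hc : h * g * h⁻¹ = g := by
      rw [mul_comm h g, mul_assoc, mul_inv_cancel, mul_one]
    rw [hc]

/-- If an infinite abelian group satisfies `g ^ m = 1` for all `g`, then for some prime `p`
the quotient by the subgroup of `p`-th powers is infinite. -/
lemma finite_of_finite_prime_quotients :
    ∀ m : ℕ, 0 < m → ∀ {G : Type u} [CommGroup G], (∀ g : G, g ^ m = 1) →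
      (∀ p : ℕ, p.Prime → Finite (G ⧸ (powMonoidHom p : G →* G).range)) → Finite G := by
  intro m
  induction m using Nat.strong_induction_on with
  | _ m IH =>
    intro hm G _ hexp hq
    rcases eq_or_lt_of_le (Nat.one_le_iff_ne_zero.mpr hm.ne') with h1 | h2
    · -- m = 1
      have : ∀ g : G, g = 1 := by intro g; simpa using (h1 ▸ hexp g : g ^ 1 = 1)
      haveI : Subsingleton G := ⟨fun a b => by rw [this a, this b]⟩
      exact Finite.of_subsingleton
    · -- m ≥ 2
      set p := m.minFac with hp
      have hpp : p.Prime := Nat.minFac_prime (by omega)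
      have hpd : p ∣ m := Nat.minFac_dvd m
      set H := (powMonoidHom p : G →* G).range with hH
      -- H has exponent dividing m / p
      have hHexp : ∀ h : H, h ^ (m / p) = 1 := by
        rintro ⟨_, g, rfl⟩
        ext
        show (powMonoidHom p g) ^ (m / p) = 1
        simp only [powMonoidHom_apply]
        rw [← pow_mul, Nat.mul_div_cancel' hpd]
        exact hexp g
      -- the restriction of `g ↦ g ^ p` onto H is surjective
      have hsurj : Function.Surjective ((powMonoidHom p : G →* G).rangeRestrict) :=
        MonoidHom.rangeRestrict_surjective _
      -- each prime quotient of H is finite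
      have hqH : ∀ q : ℕ, q.Prime → Finite (H ⧸ (powMonoidHom q : H →* H).range) := by
        intro q hqprime
        set Hq := (powMonoidHom q : H →* H).range
        set Gq := (powMonoidHom q : G →* G).range
        have hle : Gq ≤ Hq.comap ((powMonoidHom p : G →* G).rangeRestrict) := by
          rintro _ ⟨g, rfl⟩
          exact ⟨(powMonoidHom p : G →* G).rangeRestrict g, by
            simp only [powMonoidHom_apply, map_pow]⟩
        have hfin : Finite (G ⧸ Gq) := hq q hqprime
        have : Function.Surjective
            (QuotientGroup.map Gq Hq ((powMonoidHom p : G →* G).rangeRestrict) hle) := by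
          intro y
          obtain ⟨h, rfl⟩ := QuotientGroup.mk_surjective y
          obtain ⟨g, rfl⟩ := hsurj h
          exact ⟨QuotientGroup.mk g, rfl⟩
        exact Finite.of_surjective _ this
      -- by induction H is finite
      have hmp1 : 0 < m / p := Nat.div_pos (Nat.minFac_le hm) hpp.pos
      have hmp2 : m / p < m := Nat.div_lt_self hm hpp.one_lt
      have hHfin : Finite H := IH (m / p) hmp2 hmp1 hHexp hqH
      have hQfin : Finite (G ⧸ H) := hq p hpp
      exact Finite.of_equiv _ (Subgroup.groupEquivQuotientProdSubgroup (s := H)).symm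

/-- An infinite vector space over `ZMod p` carries an unbounded subadditive function. -/
lemma exists_unbounded_seminorm_vs (p : ℕ) [Fact p.Prime] (V : Type u)
    [AddCommGroup V] [Module (ZMod p) V] [Infinite V] :
    ∃ μ : V → ℝ, μ 0 = 0 ∧ (∀ v, 0 ≤ μ v) ∧ (∀ v, μ (-v) = μ v) ∧
      (∀ v w, μ (v + w) ≤ μ v + μ w) ∧ (∀ C : ℝ, ∃ v : V, C < μ v) := by
  set b := Module.Basis.ofVectorSpace (ZMod p) V with hb
  set ι := Module.Basis.ofVectorSpaceIndex (ZMod p) V with hι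
  haveI : Infinite ι := by
    rw [← not_finite_iff_infinite]
    intro hfinι
    haveI := hfinι
    haveI : Finite (ι →₀ ZMod p) := Finite.of_equiv _ (Finsupp.equivFunOnFinite).symm
    haveI : Finite V := Finite.of_equiv _ b.repr.symm.toEquiv
    exact not_finite V
  set u := Infinite.natEmbedding ι with hu
  set c : ι → ℕ := fun i => Function.invFun u i with hc
  have hcu : ∀ n : ℕ, c (u n) = n := fun n =>
    Function.leftInverse_invFun u.injective n
  refine ⟨fun v => (((b.repr v).support.sup c : ℕ) : ℝ), ?_, fun v => Nat.cast_nonneg _,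
    ?_, ?_, ?_⟩
  · show (((b.repr (0:V)).support.sup c : ℕ) : ℝ) = 0
    rw [map_zero]; simp
  · intro v
    show (((b.repr (-v)).support.sup c : ℕ) : ℝ) = (((b.repr v).support.sup c : ℕ) : ℝ)
    rw [map_neg, Finsupp.support_neg]
  · intro v w
    show (((b.repr (v + w)).support.sup c : ℕ) : ℝ)
      ≤ (((b.repr v).support.sup c : ℕ) : ℝ) + (((b.repr w).support.sup c : ℕ) : ℝ)
    rw [map_add]
    have hsub := Finsupp.support_add (g₁ := b.repr v) (g₂ := b.repr w)
    have h1 := Finset.sup_mono (f := c) hsub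
    rw [Finset.sup_union] at h1
    have h2 : ∀ s t : ℕ, (s ⊔ t : ℕ) ≤ s + t := fun s t =>
      sup_le (Nat.le_add_right _ _) (Nat.le_add_left _ _)
    have h3 : (b.repr v + b.repr w).support.sup c
        ≤ (b.repr v).support.sup c + (b.repr w).support.sup c :=
      le_trans h1 (h2 _ _)
    exact_mod_cast h3
  · intro C
    obtain ⟨m, hm⟩ := exists_nat_gt C
    refine ⟨b (u m), ?_⟩
    show C < (((b.repr (b (u m))).support.sup c : ℕ) : ℝ)
    rw [b.repr_self, Finsupp.support_single_ne_zero _ one_ne_zero,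
      Finset.sup_singleton, hcu]
    exact hm

/-- Every infinite abelian group carries an unbounded conjugation-invariant norm. -/
lemma exists_unbounded_norm (G : Type u) [CommGroup G] [Infinite G] :
    ∃ ν : G → ℝ, IsConjInvariantNorm ν ∧ ∀ C : ℝ, ∃ g : G, C < ν g := by
  -- It suffices to construct an unbounded seminorm
  suffices h : ∃ μ : G → ℝ, μ 1 = 0 ∧ (∀ g, 0 ≤ μ g) ∧ (∀ g, μ g⁻¹ = μ g) ∧
      (∀ g h, μ (g * h) ≤ μ g + μ h) ∧ (∀ C : ℝ, ∃ g : G, C < μ g) by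
    obtain ⟨μ, h0, hnn, hinv, hadd, hub⟩ := h
    refine ⟨fun g => μ g + if g = 1 then 0 else 1,
      norm_of_seminorm μ h0 hnn hinv hadd, fun C => ?_⟩
    obtain ⟨g, hg⟩ := hub C
    refine ⟨g, ?_⟩
    have h1 : (0:ℝ) ≤ if g = 1 then 0 else 1 := by
      by_cases h : g = 1 <;> simp [h]
    show C < μ g + if g = 1 then 0 else 1
    linarith
  by_cases hfin : ∃ g : G, ¬IsOfFinOrder g
  · -- Case 1 : an element of infinite order; map to ℚ using injectivity of ℚ.
    obtain ⟨a, ha⟩ := hfin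
    haveI hQinj : Module.Injective ℤ ℚ :=
      Module.Baer.injective (Module.Baer.of_divisible ℚ)
    haveI : Module.Injective ℤ (ULift.{u} ℚ) :=
      Module.ulift_injective_of_injective _ hQinj
    set A := Additive G with hA
    -- the ℤ-linear map `ULift ℤ → A`, `n ↦ n • a`
    set f : ULift.{u} ℤ →ₗ[ℤ] A :=
      (LinearMap.toSpanSingleton ℤ A (Additive.ofMul a)) ∘ₗ ULift.moduleEquiv.toLinearMap
      with hf
    have hfapp : ∀ n : ℤ, f ⟨n⟩ = Additive.ofMul (a ^ n) := by
      intro n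
      show (n : ℤ) • Additive.ofMul a = _
      rw [ofMul_zpow]
    have hfinj : Function.Injective f := by
      have hz : Function.Injective fun n : ℤ => a ^ n :=
        injective_zpow_iff_not_isOfFinOrder.mpr ha
      intro x y hxy
      rw [show x = (⟨x.down⟩ : ULift ℤ) from rfl, show y = (⟨y.down⟩ : ULift ℤ) from rfl,
        hfapp, hfapp] at hxy
      have h2 : a ^ x.down = a ^ y.down := by
        have := congrArg Additive.toMul hxy
        simpa using this
      exact ULift.ext _ _ (hz h2)
    set g : ULift.{u} ℤ →ₗ[ℤ] ULift.{u} ℚ :=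
      ULift.moduleEquiv.symm.toLinearMap ∘ₗ
        (LinearMap.toSpanSingleton ℤ ℚ 1) ∘ₗ ULift.moduleEquiv.toLinearMap with hg
    obtain ⟨φ, hφ⟩ := Module.Injective.out f hfinj g
    set q : G → ℚ := fun x => (φ (Additive.ofMul x)).down with hq
    have hq1 : q 1 = 0 := by
      rw [hq]
      show (φ (0 : A)).down = 0
      rw [map_zero]; rfl
    have hqinv : ∀ x : G, q x⁻¹ = -q x := by
      intro x
      show (φ (Additive.ofMul x⁻¹)).down = -(φ (Additive.ofMul x)).down
      rw [show Additive.ofMul x⁻¹ = -Additive.ofMul x from rfl, map_neg]; rfl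
    have hqadd : ∀ x y : G, q (x * y) = q x + q y := by
      intro x y
      show (φ (Additive.ofMul (x * y))).down = _
      rw [show Additive.ofMul (x * y) = Additive.ofMul x + Additive.ofMul y from rfl,
        map_add]
      rfl
    refine ⟨fun x => ((|q x| : ℚ) : ℝ), ?_, fun x => by positivity, ?_, ?_, ?_⟩
    · show ((|q 1| : ℚ) : ℝ) = 0
      rw [hq1]; simp
    · intro x
      show ((|q x⁻¹| : ℚ) : ℝ) = _
      rw [hqinv, abs_neg]
    · intro x y
      show ((|q (x * y)| : ℚ) : ℝ) ≤ _
      rw [hqadd]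
      push_cast
      exact_mod_cast abs_add_le (q x) (q y)
    · intro C
      obtain ⟨n, hn⟩ := exists_nat_gt C
      refine ⟨a ^ (n : ℤ), ?_⟩
      show C < ((|q (a ^ (n : ℤ))| : ℚ) : ℝ)
      have h1 : q (a ^ (n : ℤ)) = (n : ℚ) := by
        rw [hq]
        show (φ (Additive.ofMul (a ^ (n : ℤ)))).down = (n : ℚ)
        rw [← hfapp, hφ]
        show ((n : ℤ) • (1 : ℚ)) = (n : ℚ)
        simp
      rw [h1]
      rw [abs_of_nonneg (by positivity : (0:ℚ) ≤ (n : ℚ))]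
      exact_mod_cast hn
  · push_neg at hfin
    by_cases hub : ∀ n : ℕ, ∃ g : G, n ≤ orderOf g
    · -- Case 2 : torsion with unbounded orders : use log of the order.
      refine ⟨fun g => Real.log (orderOf g : ℝ), by simp, ?_, ?_, ?_, ?_⟩
      · intro g
        apply Real.log_nonneg
        exact_mod_cast (hfin g).orderOf_pos
      · intro g; simp only [orderOf_inv]
      · intro g h
        have h1 : orderOf (g * h) ∣ orderOf g * orderOf h :=
          dvd_trans (Commute.orderOf_mul_dvd_lcm (Commute.all g h)) (Nat.lcm_dvd_mul _ _)
        have h2 : orderOf (g * h) ≤ orderOf g * orderOf h :=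
          Nat.le_of_dvd (Nat.mul_pos (hfin g).orderOf_pos (hfin h).orderOf_pos) h1
        calc Real.log (orderOf (g * h) : ℝ)
            ≤ Real.log ((orderOf g : ℝ) * (orderOf h : ℝ)) := by
              apply Real.log_le_log (by exact_mod_cast (hfin (g*h)).orderOf_pos)
              exact_mod_cast h2
          _ = Real.log (orderOf g : ℝ) + Real.log (orderOf h : ℝ) := by
              apply Real.log_mul <;>
                [exact_mod_cast (hfin g).orderOf_pos.ne'; exact_mod_cast (hfin h).orderOf_pos.ne']
      · intro C
        obtain ⟨g, hg⟩ := hub (⌈Real.exp C⌉₊ + 1)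
        refine ⟨g, ?_⟩
        rw [Real.lt_log_iff_exp_lt (by exact_mod_cast lt_of_lt_of_le (Nat.succ_pos _) hg)]
        calc Real.exp C ≤ (⌈Real.exp C⌉₊ : ℝ) := Nat.le_ceil _
          _ < ((⌈Real.exp C⌉₊ + 1 : ℕ) : ℝ) := by exact_mod_cast Nat.lt_succ_self _
          _ ≤ (orderOf g : ℝ) := by exact_mod_cast hg
    · -- Case 3 : bounded exponent.
      push_neg at hub
      obtain ⟨n, hn⟩ := hub
      have hexp : ∀ g : G, g ^ (Nat.factorial n) = 1 := by
        intro g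
        rw [← orderOf_dvd_iff_pow_eq_one]
        exact Nat.dvd_factorial (hfin g).orderOf_pos (le_of_lt (hn g))
      -- find a prime p with infinite quotient by p-th powers
      have hnotfin : ¬ (∀ p : ℕ, p.Prime →
          Finite (G ⧸ (powMonoidHom p : G →* G).range)) := by
        intro hc
        haveI : Finite G := finite_of_finite_prime_quotients (Nat.factorial n) n.factorial_pos hexp hc
        exact not_finite G
      push_neg at hnotfin
      obtain ⟨p, hpp, hpfin⟩ := hnotfin
      haveI : Infinite (G ⧸ (powMonoidHom p : G →* G).range) := by
        exact hpfin
      set Q := G ⧸ (powMonoidHom p : G →* G).range with hQ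
      -- Q is a vector space over ZMod p
      have hQp : ∀ x : Q, x ^ p = 1 := by
        intro x
        obtain ⟨g, rfl⟩ := QuotientGroup.mk_surjective x
        rw [← QuotientGroup.mk_pow, QuotientGroup.eq_one_iff]
        exact ⟨g, rfl⟩
      haveI : Fact p.Prime := ⟨hpp⟩
      set V := Additive Q with hV
      letI : Module (ZMod p) V := AddCommGroup.zmodModule (by
        intro x
        show p • x = 0
        rw [show x = Additive.ofMul (Additive.toMul x) from rfl, ← ofMul_pow, hQp]
        rfl)
      haveI : Infinite V := Infinite.of_surjective (Additive.ofMul (α := Q))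
        (Additive.ofMul (α := Q)).surjective
      obtain ⟨μ0, hz, hnn, hneg, haddV, hubV⟩ := exists_unbounded_seminorm_vs p V
      refine ⟨fun g => μ0 (Additive.ofMul (QuotientGroup.mk g : Q)), ?_, fun g => hnn _,
        ?_, ?_, ?_⟩
      · show μ0 (Additive.ofMul (1 : Q)) = 0
        exact hz
      · intro g
        show μ0 (Additive.ofMul ((QuotientGroup.mk g : Q)⁻¹)) = _
        rw [show Additive.ofMul ((QuotientGroup.mk g : Q)⁻¹)
            = -Additive.ofMul (QuotientGroup.mk g : Q) from rfl, hneg]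
      · intro g h
        show μ0 (Additive.ofMul ((QuotientGroup.mk g : Q) * (QuotientGroup.mk h : Q))) ≤ _
        rw [show Additive.ofMul ((QuotientGroup.mk g : Q) * (QuotientGroup.mk h : Q))
            = Additive.ofMul (QuotientGroup.mk g : Q)
              + Additive.ofMul (QuotientGroup.mk h : Q) from rfl]
        exact haddV _ _
      · intro C
        obtain ⟨v, hv⟩ := hubV C
        obtain ⟨g, hg⟩ := QuotientGroup.mk_surjective (Additive.toMul v : Q)
        refine ⟨g, ?_⟩
        show C < μ0 (Additive.ofMul (QuotientGroup.mk g : Q))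
        rw [hg]
        exact hv

/-- An abelian group is bounded if and only if it is finite. -/
theorem abelian_bounded_iff_finite (G : Type*) [CommGroup G] :
    (∀ ν : G → ℝ, IsConjInvariantNorm ν → ∃ C, ∀ g, ν g ≤ C) ↔ Finite G := by
  constructor
  · intro hb
    by_contra hfin
    haveI : Infinite G := not_finite_iff_infinite.mp hfin
    obtain ⟨ν, hν, hub⟩ := exists_unbounded_norm G
    obtain ⟨C, hC⟩ := hb ν hν
    obtain ⟨g, hg⟩ := hub C
    exact absurd (hC g) (not_le.mpr hg)
  · intro hfin ν _
    haveI := hfin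
    obtain ⟨g₀, hg₀⟩ := Finite.exists_max ν
    exact ⟨ν g₀, hg₀⟩
end

section
/- Let M be a topological space, U and V disjoint open subsets, and f a homeomorphism of M such that the closure of f(U ∪ V) is contained in V. Then the sets f^k(U), k ≥ 1, are pairwise disjoint; consequently f strongly m-displaces the group of homeomorphisms supported in U for every m ≥ 1, i.e., the subgroups f^j H_U f^{-j}, j = 0,…,m, pairwise commute, where H_U is the group of homeomorphisms of M supported in U. -/
/-- The group of self-homeomorphisms of `M`, under composition. -/
instance homeoGroup {M : Type*} [TopologicalSpace M] : Group (M ≃ₜ M) where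
  mul f g := g.trans f
  one := Homeomorph.refl M
  inv := Homeomorph.symm
  mul_assoc _ _ _ := rfl
  one_mul _ := rfl
  mul_one _ := rfl
  inv_mul_cancel f := by ext x; exact f.symm_apply_apply x

/-- The support of a homeomorphism: closure of the set of non-fixed points. -/
def homeoSupport {M : Type*} [TopologicalSpace M] (h : M ≃ₜ M) : Set M :=
  closure {x | h x ≠ x}

theorem displacement (M : Type*) [TopologicalSpace M] (U V : Set M)
    (hU : IsOpen U) (hV : IsOpen V) (hUV : Disjoint U V)
    (f : M ≃ₜ M) (hf : closure (f '' (U ∪ V)) ⊆ V) :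
    (∀ k l : ℕ, 1 ≤ k → 1 ≤ l → k ≠ l →
      Disjoint ((f ^ k : M ≃ₜ M) '' U) ((f ^ l : M ≃ₜ M) '' U)) ∧
    (∀ m : ℕ, 1 ≤ m → ∀ i j : ℕ, i ≤ m → j ≤ m → i ≠ j →
      ∀ a b : M ≃ₜ M, homeoSupport a ⊆ U → homeoSupport b ⊆ U →
        Commute (f ^ i * a * (f ^ i)⁻¹) (f ^ j * b * (f ^ j)⁻¹)) := by
  have hfU : f '' U ⊆ V := fun x hx =>
    hf (subset_closure (Set.image_mono (f := f) Set.subset_union_left hx))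
  have hfV : f '' V ⊆ V := fun x hx =>
    hf (subset_closure (Set.image_mono (f := f) Set.subset_union_right hx))
  have himage : ∀ (k d : ℕ) (s : Set M),
      ((f ^ (k + d) : M ≃ₜ M)) '' s
        = (f ^ k : M ≃ₜ M) '' ((f ^ d : M ≃ₜ M) '' s) := by
    intro k d s
    rw [← Set.image_comp]
    apply Set.image_congr'
    intro x
    rw [pow_add]
    rfl
  have hpowV : ∀ k : ℕ, (f ^ k : M ≃ₜ M) '' V ⊆ V := by
    intro k
    induction k with
    | zero =>
      intro x hx
      obtain ⟨y, hy, rfl⟩ := hx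
      exact hy
    | succ n ih =>
      have h1 : (f ^ (n + 1) : M ≃ₜ M) '' V = (f ^ n : M ≃ₜ M) '' (f '' V) := by
        have := himage n 1 V
        simpa [pow_one] using this
      rw [h1]
      exact subset_trans (Set.image_mono hfV) ih
  have hpowU : ∀ k : ℕ, 1 ≤ k → (f ^ k : M ≃ₜ M) '' U ⊆ V := by
    intro k hk
    obtain ⟨n, rfl⟩ : ∃ n, k = n + 1 := ⟨k - 1, by omega⟩
    have h1 : (f ^ (n + 1) : M ≃ₜ M) '' U = (f ^ n : M ≃ₜ M) '' (f '' U) := by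
      have := himage n 1 U
      simpa [pow_one] using this
    rw [h1]
    exact subset_trans (Set.image_mono hfU) (hpowV n)
  -- key disjointness for all k < l
  have hdisj : ∀ k l : ℕ, k < l →
      Disjoint ((f ^ k : M ≃ₜ M) '' U) ((f ^ l : M ≃ₜ M) '' U) := by
    intro k l hkl
    obtain ⟨d, rfl⟩ : ∃ d, l = k + d := ⟨l - k, by omega⟩
    have hd1 : 1 ≤ d := by omega
    have hsub : (f ^ (k + d) : M ≃ₜ M) '' U ⊆ (f ^ k : M ≃ₜ M) '' V := by
      rw [himage]
      exact Set.image_mono (hpowU d hd1)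
    have hdkk : Disjoint ((f ^ k : M ≃ₜ M) '' U) ((f ^ k : M ≃ₜ M) '' V) := by
      apply Set.disjoint_image_image
      intro a ha b hb
      exact fun hc => (hUV.ne_of_mem ha hb) ((f ^ k : M ≃ₜ M).injective hc)
    exact hdkk.mono_right hsub
  -- fixed point facts
  have hfix : ∀ (c : M ≃ₜ M) (x : M), x ∉ homeoSupport c → c x = x := by
    intro c x hx
    by_contra h
    exact hx (subset_closure h)
  have hmem : ∀ (c : M ≃ₜ M) (x : M), c x ≠ x → c x ∈ homeoSupport c := by
    intro c x h
    exact subset_closure (fun hc => h (c.injective hc))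
  -- homeos with disjoint supports commute
  have hcomm : ∀ a b : M ≃ₜ M, Disjoint (homeoSupport a) (homeoSupport b) →
      Commute a b := by
    intro a b hd
    have key : ∀ x, a (b x) = b (a x) := by
      intro x
      by_cases hax : a x = x
      · by_cases hbx : b x = x
        · rw [hbx, hax, hbx]
        · have h1 : b x ∈ homeoSupport b := hmem b x hbx
          have h2 : a (b x) = b x :=
            hfix a _ (fun hm => Set.disjoint_left.mp hd hm h1)
          rw [h2, hax]
      · have hxa : x ∈ homeoSupport a := subset_closure hax
        have hax2 : a x ∈ homeoSupport a := hmem a x hax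
        have hb1 : b x = x := hfix b x (fun hm => Set.disjoint_left.mp hd hxa hm)
        have hb2 : b (a x) = a x := hfix b _ (fun hm => Set.disjoint_left.mp hd hax2 hm)
        rw [hb1, hb2]
    show a * b = b * a
    ext x
    exact key x
  -- support of conjugate
  have hsupp_conj : ∀ (i : ℕ) (a : M ≃ₜ M), homeoSupport a ⊆ U →
      homeoSupport (f ^ i * a * (f ^ i)⁻¹) ⊆ (f ^ i : M ≃ₜ M) '' U := by
    intro i a ha
    set g : M ≃ₜ M := f ^ i with hg
    have hset : {x | (g * a * g⁻¹) x ≠ x} = g '' {x | a x ≠ x} := by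
      ext x
      simp only [Set.mem_setOf_eq]
      rw [show (g '' {x | a x ≠ x} : Set M) = g.symm ⁻¹' {x | a x ≠ x} from
        g.toEquiv.image_eq_preimage_symm _]
      simp only [Set.mem_preimage, Set.mem_setOf_eq]
      constructor
      · intro h hc
        apply h
        show g (a (g.symm x)) = x
        rw [hc]
        exact g.apply_symm_apply x
      · intro h hc
        apply h
        have hc' : g (a (g.symm x)) = x := hc
        have := congrArg g.symm hc'
        simpa using this
    have : homeoSupport (g * a * g⁻¹) = g '' homeoSupport a := by
      unfold homeoSupport
      rw [hset, g.image_closure]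
    rw [this]
    exact Set.image_mono ha
  constructor
  · intro k l hk hl hne
    rcases Nat.lt_or_ge k l with h | h
    · exact hdisj k l h
    · exact (hdisj l k (by omega)).symm
  · intro m hm i j hi hj hij a b ha hb
    apply hcomm
    have h1 := hsupp_conj i a ha
    have h2 := hsupp_conj j b hb
    rcases Nat.lt_or_ge i j with h | h
    · exact ((hdisj i j h).mono h1 h2)
    · exact (((hdisj j i (by omega)).mono h2 h1)).symm
end
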